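/- Let κ > 0, c_f, c_A, c_x ≥ 0, and let y : ℝ → EuclideanSpace ℝ (Fin d) be differentiable, F : ℝ → EuclideanSpace ℝ (Fin d) (the forcing), and a, b : ℝ → ℝ (input magnitudes ‖A(t)‖ and ‖x(t)‖). Suppose that for all t: y'(t) = −y(t) + F(t) + (−κ(‖y(t)‖² − 1)) • y(t), ‖y(t)‖ ≥ 1, and |(‖y(t)‖² − 1) · ⟪y(t), F(t)⟫| ≤ c_f(‖y(t)‖² − 1)² + c_A·a(t)² + c_x·b(t)². Then the derivative of t ↦ V(y(t)), where V(z) = (1/4)(‖z‖² − 1)², satisfies d/dt V(y(t)) ≤ −(1 + κ − c_f)(‖y(t)‖² − 1)² + c_A·a(t)² + c_x·b(t)² for all t. -/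

import Mathlib

open scoped RealInnerProductSpace

theorem stmt_5 (d : ℕ) (κ cf cA cx : ℝ) (hκ : 0 < κ)
    (hcf : 0 ≤ cf) (hcA : 0 ≤ cA) (hcx : 0 ≤ cx)
    (y : ℝ → EuclideanSpace ℝ (Fin d)) (hy : Differentiable ℝ y)
    (F : ℝ → EuclideanSpace ℝ (Fin d)) (a b : ℝ → ℝ)
    (hode : ∀ t, deriv y t =
      -y t + F t + (-(κ * (‖y t‖ ^ 2 - 1))) • y t)
    (hnorm : ∀ t, 1 ≤ ‖y t‖)
    (hbound : ∀ t, |(‖y t‖ ^ 2 - 1) * ⟪y t, F t⟫| ≤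
      cf * (‖y t‖ ^ 2 - 1) ^ 2 + cA * (a t) ^ 2 + cx * (b t) ^ 2)
    (V : EuclideanSpace ℝ (Fin d) → ℝ)
    (hV : ∀ z, V z = (1 / 4) * (‖z‖ ^ 2 - 1) ^ 2) :
    ∀ t, deriv (fun t => V (y t)) t ≤
      -((1 + κ - cf) * (‖y t‖ ^ 2 - 1) ^ 2) + cA * (a t) ^ 2 + cx * (b t) ^ 2 := by
  intro t
  have hdy : HasDerivAt y (deriv y t) t := (hy t).hasDerivAt
  have hinner : HasDerivAt (fun t => ‖y t‖ ^ 2)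
      (⟪y t, deriv y t⟫ + ⟪deriv y t, y t⟫) t := by
    have h1 := hdy.inner ℝ hdy
    simp only [real_inner_self_eq_norm_sq] at h1
    exact h1
  have hnsq : HasDerivAt (fun t => ‖y t‖ ^ 2) (2 * ⟪y t, deriv y t⟫) t := by
    convert hinner using 1
    rw [real_inner_comm (deriv y t) (y t)]; ring
  have hVd : HasDerivAt (fun t => V (y t))
      ((1/4) * (2 * (‖y t‖ ^ 2 - 1) ^ 1 * (2 * ⟪y t, deriv y t⟫))) t := by
    have h := (((hnsq.sub_const 1).pow 2).const_mul (1/4 : ℝ))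
    refine h.congr_of_eventuallyEq ?_
    filter_upwards with s
    rw [hV]
    rfl
  have hderiv : deriv (fun t => V (y t)) t
      = (‖y t‖ ^ 2 - 1) * ⟪y t, deriv y t⟫ := by
    rw [hVd.deriv]; ring
  have hI : ⟪y t, deriv y t⟫ =
      -‖y t‖ ^ 2 + ⟪y t, F t⟫ + (-(κ * (‖y t‖ ^ 2 - 1))) * ‖y t‖ ^ 2 := by
    rw [hode t]
    rw [inner_add_right, inner_add_right, inner_neg_right, real_inner_smul_right,
      real_inner_self_eq_norm_sq]
  set s := ‖y t‖ ^ 2 - 1 with hs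
  have hs0 : 0 ≤ s := by
    have := hnorm t
    nlinarith
  have hyn : ‖y t‖ ^ 2 = s + 1 := by rw [hs]; ring
  have hP := hbound t
  have habs : s * ⟪y t, F t⟫ ≤ cf * s ^ 2 + cA * (a t) ^ 2 + cx * (b t) ^ 2 :=
    le_trans (le_abs_self _) hP
  rw [hderiv, hI, hyn]
  nlinarith [mul_nonneg (mul_nonneg hκ.le (mul_nonneg hs0 hs0)) hs0]
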